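/- arXiv:2409.09433 — 4 statements merged into one kernel-verified Lean document; each statement's English description precedes it below -/
import Mathlib

section
/- Let d ≥ 3, γ ∈ (0, 1/2], C₁ ≥ 0 and s > 0. Let K : ℝ^d → ℝ be differentiable at every point z ≠ 0 with |K(z)| ≤ C₁‖z‖^{2−d} and ‖∇K(z)‖ ≤ C₁‖z‖^{1−d} for all z ≠ 0. Let x₁, x₂, y ∈ ℝ^d be such that ‖y − ξ‖ ≥ s for every point ξ on the closed segment joining x₁ and x₂. Then |K(y − x₁) − K(y − x₂)| ≤ 2 C₁ s^{2−d−2γ} ‖x₁ − x₂‖^{2γ}. -/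
theorem kernel_difference_interpolation
    (d : ℕ) (hd : 3 ≤ d) (γ : ℝ) (hγ : γ ∈ Set.Ioc (0:ℝ) (1/2))
    (C₁ : ℝ) (hC₁ : 0 ≤ C₁) (s : ℝ) (hs : 0 < s)
    (K : EuclideanSpace ℝ (Fin d) → ℝ)
    (hdiff : ∀ z : EuclideanSpace ℝ (Fin d), z ≠ 0 → DifferentiableAt ℝ K z)
    (hK : ∀ z : EuclideanSpace ℝ (Fin d), z ≠ 0 → |K z| ≤ C₁ * ‖z‖ ^ ((2:ℝ) - d))
    (hK' : ∀ z : EuclideanSpace ℝ (Fin d), z ≠ 0 →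
      ‖gradient K z‖ ≤ C₁ * ‖z‖ ^ ((1:ℝ) - d))
    (x₁ x₂ y : EuclideanSpace ℝ (Fin d))
    (hseg : ∀ ξ ∈ segment ℝ x₁ x₂, s ≤ ‖y - ξ‖) :
    |K (y - x₁) - K (y - x₂)| ≤
      2 * C₁ * s ^ ((2:ℝ) - d - 2 * γ) * ‖x₁ - x₂‖ ^ (2 * γ) := by
  obtain ⟨hγ0, hγ1⟩ := hγ
  have hne : ∀ ξ ∈ segment ℝ x₁ x₂, y - ξ ≠ 0 := by
    intro ξ hξ h0
    have := hseg ξ hξ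
    rw [h0, norm_zero] at this; linarith
  have hd3 : (3:ℝ) ≤ (d:ℝ) := by exact_mod_cast hd
  -- gradient norm equals fderiv norm
  have hgrad : ∀ z : EuclideanSpace ℝ (Fin d), ‖gradient K z‖ = ‖fderiv ℝ K z‖ := by
    intro z
    rw [gradient]
    exact LinearIsometryEquiv.norm_map _ _
  have h12 : x₁ ∈ segment ℝ x₁ x₂ := left_mem_segment ℝ x₁ x₂
  have h22 : x₂ ∈ segment ℝ x₁ x₂ := right_mem_segment ℝ x₁ x₂
  rcases le_or_gt ‖x₁ - x₂‖ s with hle | hlt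
  · -- mean value case
    have hmv : ‖K (y - x₁) - K (y - x₂)‖ ≤ (C₁ * s ^ ((1:ℝ) - d)) * ‖x₁ - x₂‖ := by
      have := Convex.norm_image_sub_le_of_norm_hasFDerivWithin_le
        (f := fun ξ => K (y - ξ))
        (f' := fun ξ => -(fderiv ℝ K (y - ξ)))
        (s := segment ℝ x₁ x₂) (C := C₁ * s ^ ((1:ℝ) - d))
        ?_ ?_ (convex_segment x₁ x₂) h22 h12
      · simpa [norm_sub_rev (x₂)] using this
      · intro ξ hξ
        have hdK := (hdiff _ (hne ξ hξ)).hasFDerivAt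
        have hsub : HasFDerivAt (fun ξ : EuclideanSpace ℝ (Fin d) => y - ξ)
            (-(ContinuousLinearMap.id ℝ _)) ξ := by
          simpa using (hasFDerivAt_id (𝕜 := ℝ) ξ).const_sub y
        have := hdK.comp ξ hsub
        have heq : (fderiv ℝ K (y - ξ)).comp (-(ContinuousLinearMap.id ℝ _))
            = -(fderiv ℝ K (y - ξ)) := by
          ext v; simp
        rw [heq] at this
        exact this.hasFDerivWithinAt
      · intro ξ hξ
        rw [norm_neg, ← hgrad]
        calc ‖gradient K (y - ξ)‖ ≤ C₁ * ‖y - ξ‖ ^ ((1:ℝ) - d) := hK' _ (hne ξ hξ)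
          _ ≤ C₁ * s ^ ((1:ℝ) - d) := by
              apply mul_le_mul_of_nonneg_left _ hC₁
              exact Real.rpow_le_rpow_of_nonpos (by positivity)
                (hseg ξ hξ) (by linarith)
    rcases eq_or_ne x₁ x₂ with rfl | hxne
    · simp only [sub_self, norm_zero]
      rw [Real.zero_rpow (by positivity)]
      simp
    have hx0 : 0 < ‖x₁ - x₂‖ := by
      rw [norm_pos_iff]; exact sub_ne_zero_of_ne hxne
    have key : ‖x₁ - x₂‖ ≤ s ^ (1 - 2*γ) * ‖x₁ - x₂‖ ^ (2*γ) := by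
      calc ‖x₁ - x₂‖ = ‖x₁ - x₂‖ ^ (1 - 2*γ) * ‖x₁ - x₂‖ ^ (2*γ) := by
            rw [← Real.rpow_add hx0]; ring_nf; rw [Real.rpow_one]
        _ ≤ s ^ (1 - 2*γ) * ‖x₁ - x₂‖ ^ (2*γ) := by
            apply mul_le_mul_of_nonneg_right _ (by positivity)
            exact Real.rpow_le_rpow (le_of_lt hx0) hle (by linarith)
    calc |K (y - x₁) - K (y - x₂)| ≤ (C₁ * s ^ ((1:ℝ) - d)) * ‖x₁ - x₂‖ := hmv
      _ ≤ (C₁ * s ^ ((1:ℝ) - d)) * (s ^ (1 - 2*γ) * ‖x₁ - x₂‖ ^ (2*γ)) := by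
          apply mul_le_mul_of_nonneg_left key (by positivity)
      _ = C₁ * s ^ ((2:ℝ) - d - 2*γ) * ‖x₁ - x₂‖ ^ (2*γ) := by
          rw [show ((2:ℝ) - d - 2*γ) = ((1:ℝ) - d) + (1 - 2*γ) by ring,
            Real.rpow_add hs]; ring
      _ ≤ 2 * C₁ * s ^ ((2:ℝ) - d - 2*γ) * ‖x₁ - x₂‖ ^ (2*γ) := by
          have : (0:ℝ) ≤ C₁ * s ^ ((2:ℝ) - d - 2*γ) * ‖x₁ - x₂‖ ^ (2*γ) := by positivity
          linarith
  · -- triangle inequality case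
    have hb : ∀ ξ ∈ segment ℝ x₁ x₂, |K (y - ξ)| ≤ C₁ * s ^ ((2:ℝ) - d) := by
      intro ξ hξ
      calc |K (y - ξ)| ≤ C₁ * ‖y - ξ‖ ^ ((2:ℝ) - d) := hK _ (hne ξ hξ)
        _ ≤ C₁ * s ^ ((2:ℝ) - d) := by
            apply mul_le_mul_of_nonneg_left _ hC₁
            exact Real.rpow_le_rpow_of_nonpos (by positivity)
              (hseg ξ hξ) (by linarith)
    have key : s ^ ((2:ℝ) - d) ≤ s ^ ((2:ℝ) - d - 2*γ) * ‖x₁ - x₂‖ ^ (2*γ) := by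
      calc s ^ ((2:ℝ) - d) = s ^ ((2:ℝ) - d - 2*γ) * s ^ (2*γ) := by
            rw [← Real.rpow_add hs]; ring_nf
        _ ≤ s ^ ((2:ℝ) - d - 2*γ) * ‖x₁ - x₂‖ ^ (2*γ) := by
            apply mul_le_mul_of_nonneg_left _ (by positivity)
            exact Real.rpow_le_rpow (le_of_lt hs) (le_of_lt hlt) (by positivity)
    calc |K (y - x₁) - K (y - x₂)| ≤ |K (y - x₁)| + |K (y - x₂)| := abs_sub _ _
      _ ≤ C₁ * s ^ ((2:ℝ) - d) + C₁ * s ^ ((2:ℝ) - d) := add_le_add (hb _ h12) (hb _ h22)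
      _ = 2 * C₁ * s ^ ((2:ℝ) - d) := by ring
      _ ≤ 2 * C₁ * (s ^ ((2:ℝ) - d - 2*γ) * ‖x₁ - x₂‖ ^ (2*γ)) := by
          apply mul_le_mul_of_nonneg_left key (by positivity)
      _ = 2 * C₁ * s ^ ((2:ℝ) - d - 2*γ) * ‖x₁ - x₂‖ ^ (2*γ) := by ring
end

section
/- Let d ≥ 3, γ ∈ (0, 1/2], C₁ ≥ 0 and s > 0. Let K : ℝ^d → ℝ be twice differentiable at every point z ≠ 0 with ‖∇K(z)‖ ≤ C₁‖z‖^{1−d} and with the operator norm of the Hessian satisfying ‖D²K(z)‖ ≤ C₁‖z‖^{−d} for all z ≠ 0. Let x₁, x₂, y ∈ ℝ^d be such that ‖y − ξ‖ ≥ s for every point ξ on the closed segment joining x₁ and x₂. Then ‖∇K(y − x₁) − ∇K(y − x₂)‖ ≤ 2 C₁ s^{1−d−2γ} ‖x₁ − x₂‖^{2γ}. -/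
theorem kernel_gradient_difference_interpolation
    (d : ℕ) (hd : 3 ≤ d) (γ : ℝ) (hγ : γ ∈ Set.Ioc (0:ℝ) (1/2))
    (C₁ : ℝ) (hC₁ : 0 ≤ C₁) (s : ℝ) (hs : 0 < s)
    (K : EuclideanSpace ℝ (Fin d) → ℝ)
    (hdiff : ∀ z : EuclideanSpace ℝ (Fin d), z ≠ 0 → DifferentiableAt ℝ K z)
    (hdiff2 : ∀ z : EuclideanSpace ℝ (Fin d), z ≠ 0 → DifferentiableAt ℝ (gradient K) z)
    (hK' : ∀ z : EuclideanSpace ℝ (Fin d), z ≠ 0 →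
      ‖gradient K z‖ ≤ C₁ * ‖z‖ ^ ((1:ℝ) - d))
    (hK'' : ∀ z : EuclideanSpace ℝ (Fin d), z ≠ 0 →
      ‖fderiv ℝ (gradient K) z‖ ≤ C₁ * ‖z‖ ^ (-(d:ℝ)))
    (x₁ x₂ y : EuclideanSpace ℝ (Fin d))
    (hseg : ∀ ξ ∈ segment ℝ x₁ x₂, s ≤ ‖y - ξ‖) :
    ‖gradient K (y - x₁) - gradient K (y - x₂)‖ ≤
      2 * C₁ * s ^ ((1:ℝ) - d - 2 * γ) * ‖x₁ - x₂‖ ^ (2 * γ) := by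
  obtain ⟨hγ0, hγ1⟩ := hγ
  have h2γ : 0 < 2 * γ := by linarith
  have hx1 : x₁ ∈ segment ℝ x₁ x₂ := left_mem_segment ℝ x₁ x₂
  have hx2 : x₂ ∈ segment ℝ x₁ x₂ := right_mem_segment ℝ x₁ x₂
  have hy1 : s ≤ ‖y - x₁‖ := hseg _ hx1
  have hy2 : s ≤ ‖y - x₂‖ := hseg _ hx2
  have hne1 : y - x₁ ≠ 0 := by
    intro h; rw [h, norm_zero] at hy1; linarith
  have hne2 : y - x₂ ≠ 0 := by
    intro h; rw [h, norm_zero] at hy2; linarith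
  have hd1 : (1:ℝ) - d ≤ 0 := by
    have : (3:ℝ) ≤ d := by exact_mod_cast hd
    linarith
  have hspos : (0:ℝ) < s ^ ((1:ℝ) - d) := Real.rpow_pos_of_pos hs _
  rcases le_total s ‖x₁ - x₂‖ with hcase | hcase
  · -- ‖x₁ - x₂‖ ≥ s : use triangle inequality and gradient bound
    have b1 : ‖gradient K (y - x₁)‖ ≤ C₁ * s ^ ((1:ℝ) - d) := by
      refine (hK' _ hne1).trans ?_
      exact mul_le_mul_of_nonneg_left (Real.rpow_le_rpow_of_nonpos hs hy1 hd1) hC₁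
    have b2 : ‖gradient K (y - x₂)‖ ≤ C₁ * s ^ ((1:ℝ) - d) := by
      refine (hK' _ hne2).trans ?_
      exact mul_le_mul_of_nonneg_left (Real.rpow_le_rpow_of_nonpos hs hy2 hd1) hC₁
    have key : s ^ ((1:ℝ) - d) ≤ s ^ ((1:ℝ) - d - 2 * γ) * ‖x₁ - x₂‖ ^ (2 * γ) := by
      have h1 : s ^ (2 * γ) ≤ ‖x₁ - x₂‖ ^ (2 * γ) :=
        Real.rpow_le_rpow hs.le hcase h2γ.le
      calc s ^ ((1:ℝ) - d) = s ^ ((1:ℝ) - d - 2 * γ) * s ^ (2 * γ) := by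
            rw [← Real.rpow_add hs]; ring_nf
        _ ≤ s ^ ((1:ℝ) - d - 2 * γ) * ‖x₁ - x₂‖ ^ (2 * γ) :=
            mul_le_mul_of_nonneg_left h1 (Real.rpow_pos_of_pos hs _).le
    calc ‖gradient K (y - x₁) - gradient K (y - x₂)‖
        ≤ ‖gradient K (y - x₁)‖ + ‖gradient K (y - x₂)‖ := norm_sub_le _ _
      _ ≤ 2 * (C₁ * s ^ ((1:ℝ) - d)) := by linarith
      _ ≤ 2 * C₁ * s ^ ((1:ℝ) - d - 2 * γ) * ‖x₁ - x₂‖ ^ (2 * γ) := by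
          have := mul_le_mul_of_nonneg_left key hC₁
          nlinarith
  · -- ‖x₁ - x₂‖ ≤ s : mean value inequality
    have hmem : ∀ ξ ∈ segment ℝ (y - x₂) (y - x₁), s ≤ ‖ξ‖ := by
      intro ξ hξ
      obtain ⟨a, b, ha, hb, hab, rfl⟩ := hξ
      have : a • (y - x₂) + b • (y - x₁) = y - (a • x₂ + b • x₁) := by
        rw [smul_sub, smul_sub]
        rw [show (a • y - a • x₂) + (b • y - b • x₁) = (a + b) • y - (a • x₂ + b • x₁) by
          rw [add_smul]; abel]
        rw [hab, one_smul]
      rw [this]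
      exact hseg _ ⟨b, a, hb, ha, by linarith, by abel⟩
    have hconv : Convex ℝ (segment ℝ (y - x₂) (y - x₁)) := convex_segment _ _
    have hbound : ∀ ξ ∈ segment ℝ (y - x₂) (y - x₁),
        ‖fderiv ℝ (gradient K) ξ‖ ≤ C₁ * s ^ (-(d:ℝ)) := by
      intro ξ hξ
      have hsξ := hmem ξ hξ
      have hξne : ξ ≠ 0 := by intro h; rw [h, norm_zero] at hsξ; linarith
      refine (hK'' _ hξne).trans ?_
      exact mul_le_mul_of_nonneg_left
        (Real.rpow_le_rpow_of_nonpos hs hsξ (neg_nonpos.mpr d.cast_nonneg)) hC₁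
    have hdiffon : DifferentiableOn ℝ (gradient K) (segment ℝ (y - x₂) (y - x₁)) := by
      intro ξ hξ
      have hsξ := hmem ξ hξ
      have hξne : ξ ≠ 0 := by intro h; rw [h, norm_zero] at hsξ; linarith
      exact (hdiff2 ξ hξne).differentiableWithinAt
    have hdiffat : ∀ ξ ∈ segment ℝ (y - x₂) (y - x₁), DifferentiableAt ℝ (gradient K) ξ := by
      intro ξ hξ
      have hsξ := hmem ξ hξ
      have hξne : ξ ≠ 0 := by intro h; rw [h, norm_zero] at hsξ; linarith
      exact hdiff2 ξ hξne
    have hmvt := hconv.norm_image_sub_le_of_norm_fderiv_le hdiffat hbound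
      (left_mem_segment ℝ (y - x₂) (y - x₁)) (right_mem_segment ℝ (y - x₂) (y - x₁))
    have hdist : ‖(y - x₁) - (y - x₂)‖ = ‖x₁ - x₂‖ := by
      rw [show (y - x₁) - (y - x₂) = -(x₁ - x₂) by abel, norm_neg]
    rw [hdist] at hmvt
    have hxnn : (0:ℝ) ≤ ‖x₁ - x₂‖ := norm_nonneg _
    have hpow : C₁ * s ^ (-(d:ℝ)) * ‖x₁ - x₂‖ ≤
        C₁ * s ^ ((1:ℝ) - d - 2 * γ) * ‖x₁ - x₂‖ ^ (2 * γ) := by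
      rcases eq_or_lt_of_le hxnn with h0 | h0
      · rw [← h0]
        rw [Real.zero_rpow (ne_of_gt h2γ)]
        simp
      · have hsplit : ‖x₁ - x₂‖ = ‖x₁ - x₂‖ ^ ((1:ℝ) - 2 * γ) * ‖x₁ - x₂‖ ^ (2 * γ) := by
          rw [← Real.rpow_add h0]; norm_num
        have h1 : ‖x₁ - x₂‖ ^ ((1:ℝ) - 2 * γ) ≤ s ^ ((1:ℝ) - 2 * γ) :=
          Real.rpow_le_rpow hxnn hcase (by linarith)
        have h2 : s ^ (-(d:ℝ)) * s ^ ((1:ℝ) - 2 * γ) = s ^ ((1:ℝ) - d - 2 * γ) := by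
          rw [← Real.rpow_add hs]; ring_nf
        calc C₁ * s ^ (-(d:ℝ)) * ‖x₁ - x₂‖
            = C₁ * s ^ (-(d:ℝ)) * (‖x₁ - x₂‖ ^ ((1:ℝ) - 2 * γ) * ‖x₁ - x₂‖ ^ (2 * γ)) := by
              rw [← hsplit]
          _ ≤ C₁ * s ^ (-(d:ℝ)) * (s ^ ((1:ℝ) - 2 * γ) * ‖x₁ - x₂‖ ^ (2 * γ)) := by
              apply mul_le_mul_of_nonneg_left
              · exact mul_le_mul_of_nonneg_right h1 (Real.rpow_nonneg hxnn _)
              · positivity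
          _ = C₁ * s ^ ((1:ℝ) - d - 2 * γ) * ‖x₁ - x₂‖ ^ (2 * γ) := by
              rw [← h2]; ring
    have hfinal : ‖gradient K (y - x₁) - gradient K (y - x₂)‖ ≤
        C₁ * s ^ ((1:ℝ) - d - 2 * γ) * ‖x₁ - x₂‖ ^ (2 * γ) := hmvt.trans hpow
    have hrhs : (0:ℝ) ≤ C₁ * s ^ ((1:ℝ) - d - 2 * γ) * ‖x₁ - x₂‖ ^ (2 * γ) := by positivity
    linarith
end

section
/- Let d ≥ 3, γ ∈ (0, 1/2), and set β := (d−2)/(d−2+2γ). Let C₀, C₁, C₂, M₀ ≥ 0. Then there exists a constant C, depending only on d, γ, C₀, C₁, C₂, such that the following holds. Let δ ∈ (0, 1], and let x₁, x₂ ∈ ℝ^d with ‖x₁ − x₂‖ ≤ δ^β. Let K : ℝ^d → ℝ be twice continuously differentiable on ℝ^d ∖ {0} with |K(z)| ≤ C₁‖z‖^{2−d}, ‖∇K(z)‖ ≤ C₁‖z‖^{1−d}, and ‖D²K(z)‖ ≤ C₁‖z‖^{−d} for all z ≠ 0, and set ψ(y) := K(y − x₁) − K(y − x₂). Let A ⊆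 ℝ^d be Lebesgue measurable with measure at most C₀ δ^d and such that ‖y − ξ‖ ≥ 9 δ^β for every y ∈ A and every ξ on the closed segment joining x₁ and x₂. Let M : ℝ^d → ℝ be measurable with |M(y)| ≤ M₀ for all y ∈ A, and let η : ℝ^d → ℝ be twice continuously differentiable with ‖∇η(y)‖ ≤ 4/δ and |Δη(y)| ≤ C₂/δ² for all y ∈ A. Then |∫_A M(y) [ ψ(y) Δη(y) + 2 ⟨∇ψ(y), ∇η(y)⟩ ] dy| ≤ C M₀ ‖x₁ − x₂‖^{2γ}. -/
open MeasureTheory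
open scoped RealInnerProductSpace

lemma norm_gradient_eq' {E : Type*} [NormedAddCommGroup E] [InnerProductSpace ℝ E]
    [CompleteSpace E] (f : E → ℝ) (x : E) : ‖gradient f x‖ = ‖fderiv ℝ f x‖ := by
  rw [show gradient f x = (InnerProductSpace.toDual ℝ E).symm (fderiv ℝ f x) from rfl]
  exact LinearIsometryEquiv.norm_map _ _

lemma differentiableAt_gradient_of_contDiffOn' {E : Type*} [NormedAddCommGroup E]
    [InnerProductSpace ℝ E] [CompleteSpace E] {K : E → ℝ} {s : Set E} (hs : IsOpen s)
    (hK : ContDiffOn ℝ 2 K s) {z : E} (hz : z ∈ s) :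
    DifferentiableAt ℝ (gradient K) z := by
  have h2 : ContDiffAt ℝ 2 K z := hK.contDiffAt (hs.mem_nhds hz)
  have h1 : ContDiffAt ℝ 1 (fderiv ℝ K) z := h2.fderiv_right (by norm_num)
  have hd : DifferentiableAt ℝ (fderiv ℝ K) z := h1.differentiableAt one_ne_zero
  have : gradient K = fun x => (InnerProductSpace.toDual ℝ E).symm (fderiv ℝ K x) := rfl
  rw [this]
  exact ((InnerProductSpace.toDual ℝ E).symm.differentiable.differentiableAt).comp z hd

lemma seg_mem' {E : Type*} [NormedAddCommGroup E] [NormedSpace ℝ E] (x₁ x₂ y z : E)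
    (hz : z ∈ segment ℝ (y - x₁) (y - x₂)) : ∃ ξ ∈ segment ℝ x₁ x₂, z = y - ξ := by
  obtain ⟨a, b, ha, hb, hab, rfl⟩ := hz
  refine ⟨a • x₁ + b • x₂, ⟨a, b, ha, hb, hab, rfl⟩, ?_⟩
  have hy' : a • y + b • y = y := by rw [← add_smul, hab, one_smul]
  calc a • (y - x₁) + b • (y - x₂) = (a • y + b • y) - (a • x₁ + b • x₂) := by
        rw [smul_sub, smul_sub]; abel
    _ = y - (a • x₁ + b • x₂) := by rw [hy']

/-- Second-order partial derivative `∂ᵢ∂ⱼ φ` on Euclidean space. -/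
noncomputable def pd2 {d : ℕ} (φ : EuclideanSpace ℝ (Fin d) → ℝ) (i j : Fin d)
    (y : EuclideanSpace ℝ (Fin d)) : ℝ :=
  fderiv ℝ (fun z => fderiv ℝ φ z (EuclideanSpace.single i 1)) y (EuclideanSpace.single j 1)

theorem boundary_layer_term_estimate
    (d : ℕ) (hd : 3 ≤ d) (γ : ℝ) (hγ : γ ∈ Set.Ioo (0:ℝ) (1/2))
    (C₀ C₁ C₂ M₀ : ℝ) (hC₀ : 0 ≤ C₀) (hC₁ : 0 ≤ C₁) (hC₂ : 0 ≤ C₂) (hM₀ : 0 ≤ M₀) :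
    ∃ C : ℝ,
      ∀ (δ : ℝ), 0 < δ → δ ≤ 1 →
      ∀ (x₁ x₂ : EuclideanSpace ℝ (Fin d)),
        ‖x₁ - x₂‖ ≤ δ ^ (((d:ℝ) - 2) / ((d:ℝ) - 2 + 2 * γ)) →
      ∀ (K : EuclideanSpace ℝ (Fin d) → ℝ),
        ContDiffOn ℝ 2 K ({(0 : EuclideanSpace ℝ (Fin d))}ᶜ) →
        (∀ z : EuclideanSpace ℝ (Fin d), z ≠ 0 → |K z| ≤ C₁ * ‖z‖ ^ ((2:ℝ) - d)) →
        (∀ z : EuclideanSpace ℝ (Fin d), z ≠ 0 →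
          ‖gradient K z‖ ≤ C₁ * ‖z‖ ^ ((1:ℝ) - d)) →
        (∀ z : EuclideanSpace ℝ (Fin d), z ≠ 0 →
          ‖fderiv ℝ (gradient K) z‖ ≤ C₁ * ‖z‖ ^ (-(d:ℝ))) →
      ∀ (A : Set (EuclideanSpace ℝ (Fin d))), MeasurableSet A →
        volume A ≤ ENNReal.ofReal (C₀ * δ ^ d) →
        (∀ y ∈ A, ∀ ξ ∈ segment ℝ x₁ x₂,
          9 * δ ^ (((d:ℝ) - 2) / ((d:ℝ) - 2 + 2 * γ)) ≤ ‖y - ξ‖) →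
      ∀ (M : EuclideanSpace ℝ (Fin d) → ℝ), Measurable M → (∀ y ∈ A, |M y| ≤ M₀) →
      ∀ (η : EuclideanSpace ℝ (Fin d) → ℝ), ContDiff ℝ 2 η →
        (∀ y ∈ A, ‖gradient η y‖ ≤ 4 / δ) →
        (∀ y ∈ A, |∑ i, pd2 η i i y| ≤ C₂ / δ ^ 2) →
      |∫ y in A, M y * ((K (y - x₁) - K (y - x₂)) * (∑ i, pd2 η i i y)
          + 2 * ⟪gradient K (y - x₁) - gradient K (y - x₂), gradient η y⟫)| ≤
        C * M₀ * ‖x₁ - x₂‖ ^ (2 * γ) := by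
  refine ⟨C₀ * C₁ * (C₂ + 8), ?_⟩
  intro δ hδ hδ1 x₁ x₂ hx K hK hK0 hK1 hK2 A hAm hAvol hAdist M hMm hMbd η hη hη1 hη2
  have hγ0 := hγ.1
  have hγ2 := hγ.2
  by_cases hr0 : x₁ = x₂
  · subst hr0
    simp [sub_self, Real.zero_rpow (show 2 * γ ≠ 0 by positivity)]
  -- notation
  set β : ℝ := ((d:ℝ) - 2) / ((d:ℝ) - 2 + 2 * γ) with hβ_def
  have hD3 : (3:ℝ) ≤ (d:ℝ) := by exact_mod_cast hd
  have hden : 0 < (d:ℝ) - 2 + 2 * γ := by linarith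
  have hβ0 : 0 ≤ β := div_nonneg (by linarith) hden.le
  have hβ1 : β ≤ 1 := (div_le_one hden).mpr (by linarith)
  set r : ℝ := ‖x₁ - x₂‖ with hr_def
  have hrpos : 0 < r := norm_pos_iff.mpr (sub_ne_zero.mpr hr0)
  have hδβ : 0 < δ ^ β := Real.rpow_pos_of_pos hδ β
  set ρ : ℝ := 9 * δ ^ β with hρ_def
  have hρpos : 0 < ρ := by positivity
  have hρδ : δ ^ β ≤ ρ := by nlinarith
  -- segment bound
  have hseg : ∀ y ∈ A, ∀ z ∈ segment ℝ (y - x₁) (y - x₂), ρ ≤ ‖z‖ := by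
    intro y hy z hz
    obtain ⟨ξ, hξ, rfl⟩ := seg_mem' x₁ x₂ y z hz
    exact hAdist y hy ξ hξ
  have hsegne : ∀ y ∈ A, ∀ z ∈ segment ℝ (y - x₁) (y - x₂), z ≠ 0 := by
    intro y hy z hz h0
    have := hseg y hy z hz
    rw [h0, norm_zero] at this
    linarith
  -- bound on ψ
  have hψ : ∀ y ∈ A, |K (y - x₁) - K (y - x₂)| ≤ C₁ * ρ ^ ((1:ℝ) - d) * r := by
    intro y hy
    have hmvt := Convex.norm_image_sub_le_of_norm_fderiv_le
      (f := K) (s := segment ℝ (y - x₁) (y - x₂)) (C := C₁ * ρ ^ ((1:ℝ) - d))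
      (fun z hz => (hK.contDiffAt (isOpen_compl_singleton.mem_nhds (hsegne y hy z hz))).differentiableAt two_ne_zero)
      (fun z hz => by
        rw [← norm_gradient_eq']
        refine le_trans (hK1 z (hsegne y hy z hz)) ?_
        exact mul_le_mul_of_nonneg_left
          (Real.rpow_le_rpow_of_nonpos hρpos (hseg y hy z hz) (by linarith)) hC₁ )
      (convex_segment _ _) (left_mem_segment ℝ _ _) (right_mem_segment ℝ _ _)
    have heq : (y - x₂) - (y - x₁) = x₁ - x₂ := by abel
    rw [heq] at hmvt
    rw [norm_sub_rev] at hmvt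
    simpa [Real.norm_eq_abs, abs_sub_comm] using hmvt
  -- bound on gradient difference
  have hgrad : ∀ y ∈ A,
      ‖gradient K (y - x₁) - gradient K (y - x₂)‖ ≤ C₁ * ρ ^ (-(d:ℝ)) * r := by
    intro y hy
    have hmvt := Convex.norm_image_sub_le_of_norm_fderiv_le
      (f := gradient K) (s := segment ℝ (y - x₁) (y - x₂)) (C := C₁ * ρ ^ (-(d:ℝ)))
      (fun z hz => differentiableAt_gradient_of_contDiffOn' isOpen_compl_singleton hK
        (hsegne y hy z hz))
      (fun z hz => by
        refine le_trans (hK2 z (hsegne y hy z hz)) ?_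
        exact mul_le_mul_of_nonneg_left
          (Real.rpow_le_rpow_of_nonpos hρpos (hseg y hy z hz) (by linarith)) hC₁ )
      (convex_segment _ _) (left_mem_segment ℝ _ _) (right_mem_segment ℝ _ _)
    have heq : (y - x₂) - (y - x₁) = x₁ - x₂ := by abel
    rw [heq] at hmvt
    rw [norm_sub_rev (gradient K (y - x₂))] at hmvt
    exact hmvt
  -- pointwise bound on the integrand
  set B : ℝ := M₀ * (C₁ * ρ ^ ((1:ℝ) - d) * r * (C₂ / δ ^ 2)
      + 2 * (C₁ * ρ ^ (-(d:ℝ)) * r) * (4 / δ)) with hB_def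
  have hpt : ∀ y ∈ A,
      ‖M y * ((K (y - x₁) - K (y - x₂)) * (∑ i, pd2 η i i y)
        + 2 * ⟪gradient K (y - x₁) - gradient K (y - x₂), gradient η y⟫)‖ ≤ B := by
    intro y hy
    rw [Real.norm_eq_abs, abs_mul]
    have h1 : |(K (y - x₁) - K (y - x₂)) * (∑ i, pd2 η i i y)|
        ≤ C₁ * ρ ^ ((1:ℝ) - d) * r * (C₂ / δ ^ 2) := by
      rw [abs_mul]
      exact mul_le_mul (hψ y hy) (hη2 y hy) (abs_nonneg _) (by positivity)
    have h2 : |2 * ⟪gradient K (y - x₁) - gradient K (y - x₂), gradient η y⟫|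
        ≤ 2 * (C₁ * ρ ^ (-(d:ℝ)) * r) * (4 / δ) := by
      rw [abs_mul, abs_two, mul_assoc]
      gcongr
      calc |⟪gradient K (y - x₁) - gradient K (y - x₂), gradient η y⟫|
          ≤ ‖gradient K (y - x₁) - gradient K (y - x₂)‖ * ‖gradient η y‖ :=
            abs_real_inner_le_norm _ _
        _ ≤ (C₁ * ρ ^ (-(d:ℝ)) * r) * (4 / δ) :=
            mul_le_mul (hgrad y hy) (hη1 y hy) (norm_nonneg _) (by positivity)
    calc |M y| * |(K (y - x₁) - K (y - x₂)) * (∑ i, pd2 η i i y)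
          + 2 * ⟪gradient K (y - x₁) - gradient K (y - x₂), gradient η y⟫|
        ≤ M₀ * (C₁ * ρ ^ ((1:ℝ) - d) * r * (C₂ / δ ^ 2)
            + 2 * (C₁ * ρ ^ (-(d:ℝ)) * r) * (4 / δ)) := by
          refine mul_le_mul (hMbd y hy) ?_ (abs_nonneg _) hM₀
          exact le_trans (abs_add_le _ _) (add_le_add h1 h2)
      _ = B := rfl
  -- integral bound
  have hBnn : 0 ≤ B := by positivity
  have hμfin : volume A < ⊤ := lt_of_le_of_lt hAvol ENNReal.ofReal_lt_top
  have hint : |∫ y in A, M y * ((K (y - x₁) - K (y - x₂)) * (∑ i, pd2 η i i y)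
      + 2 * ⟪gradient K (y - x₁) - gradient K (y - x₂), gradient η y⟫)|
      ≤ B * (volume A).toReal := by
    rw [← Real.norm_eq_abs]
    exact norm_setIntegral_le_of_norm_le_const hμfin hpt
  have hμle : (volume A).toReal ≤ C₀ * δ ^ d :=
    ENNReal.toReal_le_of_le_ofReal (by positivity) hAvol
  have hint2 : |∫ y in A, M y * ((K (y - x₁) - K (y - x₂)) * (∑ i, pd2 η i i y)
      + 2 * ⟪gradient K (y - x₁) - gradient K (y - x₂), gradient η y⟫)|
      ≤ B * (C₀ * δ ^ d) :=
    le_trans hint (mul_le_mul_of_nonneg_left hμle hBnn)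
  refine le_trans hint2 ?_
  -- final algebra
  have hrle : r ≤ δ ^ β := hx
  have hr2γ : 0 ≤ r ^ (2 * γ) := Real.rpow_nonneg hrpos.le _
  have hr_split : r ≤ (δ ^ β) ^ ((1:ℝ) - 2 * γ) * r ^ (2 * γ) := by
    have hr_eq : r = r ^ ((1:ℝ) - 2 * γ) * r ^ (2 * γ) := by
      rw [← Real.rpow_add hrpos, show (1:ℝ) - 2 * γ + 2 * γ = 1 by ring, Real.rpow_one]
    calc r = r ^ ((1:ℝ) - 2 * γ) * r ^ (2 * γ) := hr_eq
      _ ≤ (δ ^ β) ^ ((1:ℝ) - 2 * γ) * r ^ (2 * γ) :=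
        mul_le_mul_of_nonneg_right
          (Real.rpow_le_rpow hrpos.le hrle (by linarith)) hr2γ
  have he1 : β * ((1:ℝ) - d) + (β * ((1:ℝ) - 2 * γ) + ((d:ℝ) - 2)) = 0 := by
    rw [hβ_def]; field_simp; ring
  have he2 : β * (-(d:ℝ)) + (β * ((1:ℝ) - 2 * γ) + ((d:ℝ) - 1)) = 1 - β := by
    rw [hβ_def]; field_simp; ring
  have hT1 : ρ ^ ((1:ℝ) - d) * r * δ ^ ((d:ℝ) - 2) ≤ r ^ (2 * γ) := by
    calc ρ ^ ((1:ℝ) - d) * r * δ ^ ((d:ℝ) - 2)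
        ≤ (δ ^ β) ^ ((1:ℝ) - d) * ((δ ^ β) ^ ((1:ℝ) - 2 * γ) * r ^ (2 * γ)) * δ ^ ((d:ℝ) - 2) := by
          refine mul_le_mul_of_nonneg_right ?_ (Real.rpow_nonneg hδ.le _)
          exact mul_le_mul (Real.rpow_le_rpow_of_nonpos hδβ hρδ (by linarith)) hr_split
            hrpos.le (Real.rpow_nonneg hδβ.le _)
      _ = δ ^ (β * ((1:ℝ) - d) + (β * ((1:ℝ) - 2 * γ) + ((d:ℝ) - 2))) * r ^ (2 * γ) := by
          rw [← Real.rpow_mul hδ.le, ← Real.rpow_mul hδ.le, Real.rpow_add hδ, Real.rpow_add hδ]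
          ring
      _ = r ^ (2 * γ) := by rw [he1, Real.rpow_zero, one_mul]
  have hT2 : ρ ^ (-(d:ℝ)) * r * δ ^ ((d:ℝ) - 1) ≤ r ^ (2 * γ) := by
    calc ρ ^ (-(d:ℝ)) * r * δ ^ ((d:ℝ) - 1)
        ≤ (δ ^ β) ^ (-(d:ℝ)) * ((δ ^ β) ^ ((1:ℝ) - 2 * γ) * r ^ (2 * γ)) * δ ^ ((d:ℝ) - 1) := by
          refine mul_le_mul_of_nonneg_right ?_ (Real.rpow_nonneg hδ.le _)
          exact mul_le_mul (Real.rpow_le_rpow_of_nonpos hδβ hρδ (by linarith)) hr_split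
            hrpos.le (Real.rpow_nonneg hδβ.le _)
      _ = δ ^ (β * (-(d:ℝ)) + (β * ((1:ℝ) - 2 * γ) + ((d:ℝ) - 1))) * r ^ (2 * γ) := by
          rw [← Real.rpow_mul hδ.le, ← Real.rpow_mul hδ.le, Real.rpow_add hδ, Real.rpow_add hδ]
          ring
      _ = δ ^ ((1:ℝ) - β) * r ^ (2 * γ) := by rw [he2]
      _ ≤ r ^ (2 * γ) := by
          refine mul_le_of_le_one_left hr2γ ?_
          exact Real.rpow_le_one hδ.le hδ1 (by linarith)
  have hd1 : (δ:ℝ) ^ d = δ ^ ((d:ℝ) - 2) * δ ^ 2 := by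
    rw [← Real.rpow_natCast δ d, ← Real.rpow_natCast δ 2, ← Real.rpow_add hδ]
    norm_num
  have hd3 : δ ^ ((d:ℝ) - 1) = δ ^ ((d:ℝ) - 2) * δ := by
    rw [show ((d:ℝ) - 1) = ((d:ℝ) - 2) + 1 by ring, Real.rpow_add hδ, Real.rpow_one]
  have hBexp : B * (C₀ * δ ^ d) = C₀ * M₀ * (C₁ * C₂ * (ρ ^ ((1:ℝ) - d) * r * δ ^ ((d:ℝ) - 2))
      + 8 * C₁ * (ρ ^ (-(d:ℝ)) * r * δ ^ ((d:ℝ) - 1))) := by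
    rw [hB_def, hd1, hd3]
    field_simp
    ring
  calc B * (C₀ * δ ^ d)
      = C₀ * M₀ * (C₁ * C₂ * (ρ ^ ((1:ℝ) - d) * r * δ ^ ((d:ℝ) - 2))
        + 8 * C₁ * (ρ ^ (-(d:ℝ)) * r * δ ^ ((d:ℝ) - 1))) := hBexp
    _ ≤ C₀ * M₀ * (C₁ * C₂ * r ^ (2 * γ) + 8 * C₁ * r ^ (2 * γ)) := by gcongr
    _ = C₀ * C₁ * (C₂ + 8) * M₀ * r ^ (2 * γ) := by ring
end

section
/- Let d ≥ 2, γ ∈ (0, 1/2), and let c₀ > 0 and C₀ ≥ 0. Then there exists a constant C, depending only on d, γ, c₀ and C₀, such that the following holds: whenever δ > 0 and ρ > 0 satisfy c₀ δ ≤ ρ, x̄ ∈ ℝ^d, and A ⊆ ℝ^d is Lebesgue measurable with measure at most C₀ δ^d and with ‖y − x̄‖ ≥ 5ρ for all y ∈ A, then ∫_A [ ρ δ^{−1} ‖y − x̄‖^{2γ−d} + ρ δ^{−2} ‖y − x̄‖^{2γ−d+1} ] dy ≤ C ρ^{2γ}. -/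
open MeasureTheory

lemma pow_trade {δ ρ c₀ : ℝ} (hδ : 0 < δ) (hρ : 0 < ρ) (hc₀ : 0 < c₀)
    (h : c₀ * δ ≤ ρ) {a : ℝ} (ha : 0 ≤ a) :
    δ ^ a ≤ c₀ ^ (-a) * ρ ^ a := by
  have hδρ : δ ≤ ρ / c₀ := (le_div_iff₀ hc₀).2 (by linarith [h])
  calc δ ^ a ≤ (ρ / c₀) ^ a := Real.rpow_le_rpow hδ.le hδρ ha
    _ = c₀ ^ (-a) * ρ ^ a := by
        rw [Real.div_rpow hρ.le hc₀.le, Real.rpow_neg hc₀.le]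
        ring

theorem annulus_boundary_layer_estimate
    (d : ℕ) (hd : 2 ≤ d) (γ : ℝ) (hγ : γ ∈ Set.Ioo (0:ℝ) (1/2))
    (c₀ : ℝ) (hc₀ : 0 < c₀) (C₀ : ℝ) (hC₀ : 0 ≤ C₀) :
    ∃ C : ℝ, ∀ (δ ρ : ℝ), 0 < δ → 0 < ρ → c₀ * δ ≤ ρ →
      ∀ (xb : EuclideanSpace ℝ (Fin d)) (A : Set (EuclideanSpace ℝ (Fin d))),
        MeasurableSet A → volume A ≤ ENNReal.ofReal (C₀ * δ ^ d) →
        (∀ y ∈ A, 5 * ρ ≤ ‖y - xb‖) →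
        ∫ y in A,
            (ρ / δ * ‖y - xb‖ ^ (2 * γ - d) + ρ / δ ^ 2 * ‖y - xb‖ ^ (2 * γ - d + 1)) ≤
          C * ρ ^ (2 * γ) := by
  obtain ⟨hγ0, hγ2⟩ := hγ
  have hd2 : (2:ℝ) ≤ (d:ℝ) := by exact_mod_cast hd
  refine ⟨C₀ * ((5:ℝ) ^ (2*γ - (d:ℝ)) * c₀ ^ (1 - (d:ℝ))
      + (5:ℝ) ^ (2*γ - (d:ℝ) + 1) * c₀ ^ (2 - (d:ℝ))), ?_⟩
  intro δ ρ hδ hρ hcδ xb A hA hvol hfar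
  have h5ρ : (0:ℝ) < 5 * ρ := by linarith
  set M : ℝ := ρ / δ * (5*ρ) ^ (2*γ - (d:ℝ)) + ρ / δ^2 * (5*ρ) ^ (2*γ - (d:ℝ) + 1) with hM
  have hμ : volume A < ⊤ := lt_of_le_of_lt hvol ENNReal.ofReal_lt_top
  have hbound : ∀ y ∈ A,
      ‖(ρ / δ * ‖y - xb‖ ^ (2*γ - (d:ℝ)) + ρ / δ^2 * ‖y - xb‖ ^ (2*γ - (d:ℝ) + 1))‖ ≤ M := by
    intro y hy
    have h1 : ‖y - xb‖ ^ (2*γ - (d:ℝ)) ≤ (5*ρ) ^ (2*γ - (d:ℝ)) :=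
      Real.rpow_le_rpow_of_nonpos h5ρ (hfar y hy) (by linarith)
    have h2 : ‖y - xb‖ ^ (2*γ - (d:ℝ) + 1) ≤ (5*ρ) ^ (2*γ - (d:ℝ) + 1) :=
      Real.rpow_le_rpow_of_nonpos h5ρ (hfar y hy) (by linarith)
    have hn1 : (0:ℝ) ≤ ‖y - xb‖ ^ (2*γ - (d:ℝ)) := Real.rpow_nonneg (norm_nonneg _) _
    have hn2 : (0:ℝ) ≤ ‖y - xb‖ ^ (2*γ - (d:ℝ) + 1) := Real.rpow_nonneg (norm_nonneg _) _
    rw [Real.norm_eq_abs, abs_of_nonneg (by positivity)]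
    have hρδ : (0:ℝ) ≤ ρ / δ := by positivity
    have hρδ2 : (0:ℝ) ≤ ρ / δ^2 := by positivity
    exact add_le_add (mul_le_mul_of_nonneg_left h1 hρδ) (mul_le_mul_of_nonneg_left h2 hρδ2)
  have hInt : ‖∫ y in A, (ρ / δ * ‖y - xb‖ ^ (2*γ - (d:ℝ))
      + ρ / δ^2 * ‖y - xb‖ ^ (2*γ - (d:ℝ) + 1))‖ ≤ M * (volume A).toReal :=
    norm_setIntegral_le_of_norm_le_const hμ hbound
  have hM0 : 0 ≤ M := by positivity
  have hvol' : (volume A).toReal ≤ C₀ * δ ^ d := by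
    have := ENNReal.toReal_mono ENNReal.ofReal_ne_top hvol
    rwa [ENNReal.toReal_ofReal (by positivity)] at this
  have step1 : ∫ y in A, (ρ / δ * ‖y - xb‖ ^ (2*γ - (d:ℝ))
      + ρ / δ^2 * ‖y - xb‖ ^ (2*γ - (d:ℝ) + 1)) ≤ M * (C₀ * δ ^ d) :=
    le_trans (le_trans (le_abs_self _) hInt)
      (mul_le_mul_of_nonneg_left hvol' hM0)
  refine step1.trans ?_
  -- arithmetic
  have hδd : (δ:ℝ) ^ d = δ ^ (d:ℝ) := (Real.rpow_natCast δ d).symm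
  have hsplit1 : (5*ρ) ^ (2*γ - (d:ℝ)) = 5 ^ (2*γ - (d:ℝ)) * ρ ^ (2*γ - (d:ℝ)) :=
    Real.mul_rpow (by norm_num) hρ.le
  have hsplit2 : (5*ρ) ^ (2*γ - (d:ℝ) + 1) = 5 ^ (2*γ - (d:ℝ) + 1) * ρ ^ (2*γ - (d:ℝ) + 1) :=
    Real.mul_rpow (by norm_num) hρ.le
  -- δ^d / δ = δ^(d-1), δ^d / δ^2 = δ^(d-2)
  have hδ1 : δ ^ (d:ℝ) / δ = δ ^ ((d:ℝ) - 1) := by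
    rw [Real.rpow_sub hδ, Real.rpow_one]
  have hδ2 : δ ^ (d:ℝ) / δ^2 = δ ^ ((d:ℝ) - 2) := by
    rw [Real.rpow_sub hδ, Real.rpow_two]
  have ht1 : δ ^ ((d:ℝ) - 1) ≤ c₀ ^ (-((d:ℝ) - 1)) * ρ ^ ((d:ℝ) - 1) :=
    pow_trade hδ hρ hc₀ hcδ (by linarith)
  have ht2 : δ ^ ((d:ℝ) - 2) ≤ c₀ ^ (-((d:ℝ) - 2)) * ρ ^ ((d:ℝ) - 2) :=
    pow_trade hδ hρ hc₀ hcδ (by linarith)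
  have hρm1 : ρ * ρ ^ (2*γ - (d:ℝ)) * ρ ^ ((d:ℝ) - 1) = ρ ^ (2*γ) := by
    rw [show ρ * ρ ^ (2*γ - (d:ℝ)) * ρ ^ ((d:ℝ) - 1)
        = ρ ^ (1:ℝ) * ρ ^ (2*γ - (d:ℝ)) * ρ ^ ((d:ℝ) - 1) from by rw [Real.rpow_one],
      ← Real.rpow_add hρ, ← Real.rpow_add hρ]
    congr 1
    ring
  have hρm2 : ρ * ρ ^ (2*γ - (d:ℝ) + 1) * ρ ^ ((d:ℝ) - 2) = ρ ^ (2*γ) := by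
    rw [show ρ * ρ ^ (2*γ - (d:ℝ) + 1) * ρ ^ ((d:ℝ) - 2)
        = ρ ^ (1:ℝ) * ρ ^ (2*γ - (d:ℝ) + 1) * ρ ^ ((d:ℝ) - 2) from by rw [Real.rpow_one],
      ← Real.rpow_add hρ, ← Real.rpow_add hρ]
    congr 1
    ring
  have key : M * (C₀ * δ ^ d)
      = C₀ * (5 ^ (2*γ - (d:ℝ)) * (ρ * ρ ^ (2*γ - (d:ℝ))) * (δ ^ (d:ℝ) / δ)
        + 5 ^ (2*γ - (d:ℝ) + 1) * (ρ * ρ ^ (2*γ - (d:ℝ) + 1)) * (δ ^ (d:ℝ) / δ^2)) := by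
    rw [hM, hsplit1, hsplit2, hδd]; ring
  rw [key, hδ1, hδ2]
  have h5a : (0:ℝ) ≤ 5 ^ (2*γ - (d:ℝ)) := Real.rpow_nonneg (by norm_num) _
  have h5b : (0:ℝ) ≤ 5 ^ (2*γ - (d:ℝ) + 1) := Real.rpow_nonneg (by norm_num) _
  have hρ1 : (0:ℝ) ≤ ρ * ρ ^ (2*γ - (d:ℝ)) := by positivity
  have hρ2 : (0:ℝ) ≤ ρ * ρ ^ (2*γ - (d:ℝ) + 1) := by positivity
  have final : 5 ^ (2*γ - (d:ℝ)) * (ρ * ρ ^ (2*γ - (d:ℝ))) * δ ^ ((d:ℝ) - 1)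
        + 5 ^ (2*γ - (d:ℝ) + 1) * (ρ * ρ ^ (2*γ - (d:ℝ) + 1)) * δ ^ ((d:ℝ) - 2)
      ≤ 5 ^ (2*γ - (d:ℝ)) * c₀ ^ (1 - (d:ℝ)) * ρ ^ (2*γ)
        + 5 ^ (2*γ - (d:ℝ) + 1) * c₀ ^ (2 - (d:ℝ)) * ρ ^ (2*γ) := by
    have e1 : c₀ ^ (1 - (d:ℝ)) = c₀ ^ (-((d:ℝ) - 1)) := by rw [neg_sub]
    have e2 : c₀ ^ (2 - (d:ℝ)) = c₀ ^ (-((d:ℝ) - 2)) := by rw [neg_sub]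
    rw [e1, e2]
    have A1 : 5 ^ (2*γ - (d:ℝ)) * (ρ * ρ ^ (2*γ - (d:ℝ))) * δ ^ ((d:ℝ) - 1)
        ≤ 5 ^ (2*γ - (d:ℝ)) * (ρ * ρ ^ (2*γ - (d:ℝ))) * (c₀ ^ (-((d:ℝ) - 1)) * ρ ^ ((d:ℝ) - 1)) :=
      mul_le_mul_of_nonneg_left ht1 (by positivity)
    have A2 : 5 ^ (2*γ - (d:ℝ) + 1) * (ρ * ρ ^ (2*γ - (d:ℝ) + 1)) * δ ^ ((d:ℝ) - 2)
        ≤ 5 ^ (2*γ - (d:ℝ) + 1) * (ρ * ρ ^ (2*γ - (d:ℝ) + 1)) * (c₀ ^ (-((d:ℝ) - 2)) * ρ ^ ((d:ℝ) - 2)) :=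
      mul_le_mul_of_nonneg_left ht2 (by positivity)
    calc _ ≤ 5 ^ (2*γ - (d:ℝ)) * (ρ * ρ ^ (2*γ - (d:ℝ))) * (c₀ ^ (-((d:ℝ) - 1)) * ρ ^ ((d:ℝ) - 1))
            + 5 ^ (2*γ - (d:ℝ) + 1) * (ρ * ρ ^ (2*γ - (d:ℝ) + 1)) * (c₀ ^ (-((d:ℝ) - 2)) * ρ ^ ((d:ℝ) - 2)) :=
          add_le_add A1 A2
      _ = 5 ^ (2*γ - (d:ℝ)) * c₀ ^ (-((d:ℝ) - 1)) * (ρ * ρ ^ (2*γ - (d:ℝ)) * ρ ^ ((d:ℝ) - 1))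
            + 5 ^ (2*γ - (d:ℝ) + 1) * c₀ ^ (-((d:ℝ) - 2)) * (ρ * ρ ^ (2*γ - (d:ℝ) + 1) * ρ ^ ((d:ℝ) - 2)) := by ring
      _ = _ := by rw [hρm1, hρm2]
  calc C₀ * (5 ^ (2*γ - (d:ℝ)) * (ρ * ρ ^ (2*γ - (d:ℝ))) * δ ^ ((d:ℝ) - 1)
        + 5 ^ (2*γ - (d:ℝ) + 1) * (ρ * ρ ^ (2*γ - (d:ℝ) + 1)) * δ ^ ((d:ℝ) - 2))
      ≤ C₀ * (5 ^ (2*γ - (d:ℝ)) * c₀ ^ (1 - (d:ℝ)) * ρ ^ (2*γ)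
        + 5 ^ (2*γ - (d:ℝ) + 1) * c₀ ^ (2 - (d:ℝ)) * ρ ^ (2*γ)) :=
        mul_le_mul_of_nonneg_left final hC₀
    _ = _ := by ring
end
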